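/- For every t > 0 and every real x with 0 ≤ x ≤ 3t, the series ∑_{m ∈ ℤ, m ≠ 0} 2/(e^{(x−2mt)/2} + e^{−(x−2mt)/2})² converges, and its sum is strictly less than min{1/2, 2e^{x−2t}} + 4e^{−t}/(1 − e^{−2t}). -/

import Mathlib

open Real

private noncomputable def myF (u : ℝ) : ℝ :=
  2 / (Real.exp (u / 2) + Real.exp (-u / 2)) ^ 2

private lemma myF_den_pos (u : ℝ) : 0 < (Real.exp (u / 2) + Real.exp (-u / 2)) ^ 2 := by
  positivity

private lemma myF_nonneg (u : ℝ) : 0 ≤ myF u := by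
  unfold myF; positivity

private lemma myF_le_half (u : ℝ) : myF u ≤ 1 / 2 := by
  unfold myF
  rw [div_le_div_iff₀ (myF_den_pos u) (by norm_num)]
  have h1 : Real.exp (u / 2) * Real.exp (-u / 2) = 1 := by
    rw [← Real.exp_add, show u / 2 + -u / 2 = 0 by ring, Real.exp_zero]
  nlinarith [sq_nonneg (Real.exp (u / 2) - Real.exp (-u / 2))]

private lemma myF_le_exp_neg (u : ℝ) : myF u ≤ 2 * Real.exp (-u) := by
  unfold myF
  rw [div_le_iff₀ (myF_den_pos u)]
  have h1 : Real.exp (u / 2) * Real.exp (u / 2) = Real.exp u := by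
    rw [← Real.exp_add]; ring_nf
  have h2 : Real.exp (-u) * Real.exp u = 1 := by
    rw [← Real.exp_add]; norm_num
  nlinarith [Real.exp_pos (u / 2), Real.exp_pos (-u / 2), Real.exp_pos (-u), Real.exp_pos u]

private lemma myF_le_exp (u : ℝ) : myF u ≤ 2 * Real.exp u := by
  unfold myF
  rw [div_le_iff₀ (myF_den_pos u)]
  have h1 : Real.exp (-u / 2) * Real.exp (-u / 2) = Real.exp (-u) := by
    rw [← Real.exp_add]; ring_nf
  have h2 : Real.exp u * Real.exp (-u) = 1 := by
    rw [← Real.exp_add, show u + -u = 0 by ring, Real.exp_zero]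
  nlinarith [Real.exp_pos (u / 2), Real.exp_pos (-u / 2), Real.exp_pos (-u), Real.exp_pos u]

theorem statement0 (t x : ℝ) (ht : 0 < t) (hx0 : 0 ≤ x) (hx3 : x ≤ 3 * t) :
    Summable (fun m : {m : ℤ // m ≠ 0} =>
      2 / (Real.exp ((x - 2 * ((m : ℤ) : ℝ) * t) / 2)
          + Real.exp (-(x - 2 * ((m : ℤ) : ℝ) * t) / 2)) ^ 2) ∧
    (∑' m : {m : ℤ // m ≠ 0},
      2 / (Real.exp ((x - 2 * ((m : ℤ) : ℝ) * t) / 2)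
          + Real.exp (-(x - 2 * ((m : ℤ) : ℝ) * t) / 2)) ^ 2)
      < min (1 / 2) (2 * Real.exp (x - 2 * t))
          + 4 * Real.exp (-t) / (1 - Real.exp (-2 * t)) := by
  set r : ℝ := Real.exp (-2 * t) with hr
  have hr0 : 0 < r := Real.exp_pos _
  have hr1 : r < 1 := by
    rw [hr, Real.exp_lt_one_iff]; linarith
  have h1r : 0 < 1 - r := by linarith
  set f : ℤ → ℝ := fun m => myF (x - 2 * (m : ℝ) * t) with hf
  -- the statement's function is f restricted to the subtype
  have hfun : (fun m : {m : ℤ // m ≠ 0} =>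
      2 / (Real.exp ((x - 2 * ((m : ℤ) : ℝ) * t) / 2)
          + Real.exp (-(x - 2 * ((m : ℤ) : ℝ) * t) / 2)) ^ 2)
      = fun m : {m : ℤ // m ≠ 0} => f (m : ℤ) := by
    funext m; simp [hf, myF]
  -- positive-index terms
  have hApos : ∀ n : ℕ, f ((n : ℤ) + 1) = myF (x - 2 * ((n : ℝ) + 1) * t) := by
    intro n; simp [hf]
  have hBneg : ∀ n : ℕ, f (-((n : ℤ) + 1)) = myF (x + 2 * ((n : ℝ) + 1) * t) := by
    intro n; simp [hf]; ring_nf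
  -- geometric bounds
  have hrpow : ∀ n : ℕ, r ^ n = Real.exp (-2 * t * n) := by
    intro n
    rw [hr, ← Real.exp_nat_mul]
    ring_nf
  have hAbound : ∀ n : ℕ, f ((n : ℤ) + 1) ≤ 2 * Real.exp t * r ^ n := by
    intro n
    rw [hApos n, hrpow n]
    calc myF (x - 2 * ((n : ℝ) + 1) * t) ≤ 2 * Real.exp (x - 2 * ((n : ℝ) + 1) * t) :=
          myF_le_exp _
      _ ≤ 2 * Real.exp (t + -2 * t * n) := by
          gcongr
          have hn : (0 : ℝ) ≤ (n : ℝ) := Nat.cast_nonneg n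
          nlinarith
      _ = 2 * Real.exp t * Real.exp (-2 * t * n) := by rw [Real.exp_add]; ring
  have hAbound' : ∀ n : ℕ, f ((n : ℤ) + 1 + 1) ≤ 2 * Real.exp (-t) * r ^ n := by
    intro n
    have h := hApos (n + 1)
    push_cast at h
    rw [show ((n : ℤ) + 1 + 1) = ((n + 1 : ℕ) : ℤ) + 1 by push_cast; ring]
    rw [hApos (n + 1), hrpow n]
    push_cast
    calc myF (x - 2 * ((n : ℝ) + 1 + 1) * t) ≤ 2 * Real.exp (x - 2 * ((n : ℝ) + 1 + 1) * t) :=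
          myF_le_exp _
      _ ≤ 2 * Real.exp (-t + -2 * t * n) := by
          gcongr
          have hn : (0 : ℝ) ≤ (n : ℝ) := Nat.cast_nonneg n
          nlinarith
      _ = 2 * Real.exp (-t) * Real.exp (-2 * t * n) := by rw [Real.exp_add]; ring
  have hBbound : ∀ n : ℕ, f (-((n : ℤ) + 1)) ≤ 2 * r * r ^ n := by
    intro n
    rw [hBneg n, hrpow n]
    calc myF (x + 2 * ((n : ℝ) + 1) * t) ≤ 2 * Real.exp (-(x + 2 * ((n : ℝ) + 1) * t)) :=
          myF_le_exp_neg _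
      _ ≤ 2 * Real.exp (-2 * t + -2 * t * n) := by
          gcongr
          have hn : (0 : ℝ) ≤ (n : ℝ) := Nat.cast_nonneg n
          nlinarith
      _ = 2 * r * Real.exp (-2 * t * n) := by rw [hr, Real.exp_add]; ring
  -- summability
  have hgeo : Summable fun n : ℕ => r ^ n := summable_geometric_of_lt_one hr0.le hr1
  have hA : Summable fun n : ℕ => f ((n : ℤ) + 1) := by
    apply Summable.of_nonneg_of_le (fun n => by rw [hApos n]; exact myF_nonneg _) hAbound
    exact (hgeo.mul_left _)
  have hA' : Summable fun n : ℕ => f ((n : ℤ) + 1 + 1) := by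
    apply Summable.of_nonneg_of_le (fun n => ?_) hAbound' (hgeo.mul_left _)
    have : ((n : ℤ) + 1 + 1) = ((n + 1 : ℕ) : ℤ) + 1 := by push_cast; ring
    rw [this, hApos]; exact myF_nonneg _
  have hB : Summable fun n : ℕ => f (-((n : ℤ) + 1)) := by
    apply Summable.of_nonneg_of_le (fun n => by rw [hBneg n]; exact myF_nonneg _) hBbound
    exact (hgeo.mul_left _)
  have hfsum : Summable f := Summable.of_add_one_of_neg_add_one hA hB
  have hsub : Summable (fun m : {m : ℤ // m ≠ 0} => f (m : ℤ)) :=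
    hfsum.subtype _
  constructor
  · rw [hfun]; exact hsub
  rw [hfun]
  -- the subtype tsum equals tsum over ℤ minus nothing since f 0 contributes
  have hf0 : f 0 = myF x := by simp [hf]
  -- tsum over subtype: use indicator
  have hind : (∑' m : {m : ℤ // m ≠ 0}, f (m : ℤ))
      = ∑' m : ℤ, Set.indicator {m : ℤ | m ≠ 0} f m := by
    exact tsum_subtype {m : ℤ | m ≠ 0} f
  set g : ℤ → ℝ := Set.indicator {m : ℤ | m ≠ 0} f with hg
  have hgA : ∀ n : ℕ, g ((n : ℤ) + 1) = f ((n : ℤ) + 1) := by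
    intro n
    apply Set.indicator_of_mem
    simp only [Set.mem_setOf_eq]
    omega
  have hgB : ∀ n : ℕ, g (-((n : ℤ) + 1)) = f (-((n : ℤ) + 1)) := by
    intro n
    apply Set.indicator_of_mem
    simp only [Set.mem_setOf_eq]
    omega
  have hg0 : g 0 = 0 := by
    apply Set.indicator_of_notMem
    simp
  have hgAsum : Summable fun n : ℕ => g ((n : ℤ) + 1) := by
    simpa only [hgA] using hA
  have hgBsum : Summable fun n : ℕ => g (-((n : ℤ) + 1)) := by
    simpa only [hgB] using hB
  have htsum : (∑' m : ℤ, g m)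
      = (∑' n : ℕ, g ((n : ℤ) + 1)) + g 0 + ∑' n : ℕ, g (-((n : ℤ) + 1)) :=
    tsum_of_add_one_of_neg_add_one hgAsum hgBsum
  rw [hind, htsum, hg0, add_zero]
  simp only [hgA, hgB]
  -- bound the positive part
  have htsumA : (∑' n : ℕ, f ((n : ℤ) + 1))
      = f ((0 : ℤ) + 1) + ∑' n : ℕ, f ((n : ℤ) + 1 + 1) := by
    have := Summable.tsum_eq_zero_add hA
    push_cast at this ⊢
    exact this
  have hA'le : (∑' n : ℕ, f ((n : ℤ) + 1 + 1)) ≤ 2 * Real.exp (-t) / (1 - r) := by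
    calc (∑' n : ℕ, f ((n : ℤ) + 1 + 1)) ≤ ∑' n : ℕ, 2 * Real.exp (-t) * r ^ n :=
          Summable.tsum_le_tsum hAbound' hA' (hgeo.mul_left _)
      _ = 2 * Real.exp (-t) * (1 - r)⁻¹ := by
          rw [tsum_mul_left, tsum_geometric_of_lt_one hr0.le hr1]
      _ = 2 * Real.exp (-t) / (1 - r) := by rw [div_eq_mul_inv]
  have hBle : (∑' n : ℕ, f (-((n : ℤ) + 1))) ≤ 2 * r / (1 - r) := by
    calc (∑' n : ℕ, f (-((n : ℤ) + 1))) ≤ ∑' n : ℕ, 2 * r * r ^ n :=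
          Summable.tsum_le_tsum hBbound hB (hgeo.mul_left _)
      _ = 2 * r * (1 - r)⁻¹ := by
          rw [tsum_mul_left, tsum_geometric_of_lt_one hr0.le hr1]
      _ = 2 * r / (1 - r) := by rw [div_eq_mul_inv]
  have hf1 : f ((0 : ℤ) + 1) ≤ min (1 / 2) (2 * Real.exp (x - 2 * t)) := by
    have h1 : f ((0 : ℤ) + 1) = myF (x - 2 * t) := by
      simp [hf]
    rw [h1]
    exact le_min (myF_le_half _) (myF_le_exp _)
  -- final arithmetic
  have hkey : 2 * Real.exp (-t) + 2 * r < 4 * Real.exp (-t) := by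
    have : r < Real.exp (-t) := by
      rw [hr, Real.exp_lt_exp]; linarith
    linarith
  have hfinal : 2 * Real.exp (-t) / (1 - r) + 2 * r / (1 - r)
      < 4 * Real.exp (-t) / (1 - r) := by
    rw [← add_div, div_lt_div_iff₀ h1r h1r]
    nlinarith
  rw [htsumA]
  linarith
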